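/- Let C be a polygonal curve with vertices p_0, …, p_m and L(C) > 0. Then consecutive vertices of the arclength respacing f(C) satisfy ‖f(p_k) − f(p_{k−1})‖ ≤ L(C)/m for every k = 1, …, m. -/

import Mathlib

open Finset Filter

noncomputable section

/-- The length of the polygonal curve with vertices `p 0, …, p m`
(also the arclength distance from `p 0` to `p m` along the curve). -/
def polyLength {dim : ℕ} (p : ℕ → EuclideanSpace ℝ (Fin dim)) (m : ℕ) : ℝ :=
  ∑ i ∈ Finset.range m, ‖p (i + 1) - p i‖

/-- `P` is the arclength-parameterized linear interpolation of the polygonal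
curve with vertices `p 0, …, p m`:
`P ((1-t)·d_{k-1} + t·d_k) = (1-t)·p_{k-1} + t·p_k` for `t ∈ [0,1]`, `k = 1, …, m`,
where `d_k = polyLength p k` is the arclength up to vertex `k`. -/
def IsArcParam {dim : ℕ} (p : ℕ → EuclideanSpace ℝ (Fin dim)) (m : ℕ)
    (P : ℝ → EuclideanSpace ℝ (Fin dim)) : Prop :=
  ∀ k : ℕ, 1 ≤ k → k ≤ m → ∀ t : ℝ, 0 ≤ t → t ≤ 1 →
    P ((1 - t) * polyLength p (k - 1) + t * polyLength p k)
      = (1 - t) • p (k - 1) + t • p k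

/-- The polygonal curve with vertices `p 0, …, p m` is equilateral:
all consecutive interpoint distances agree. -/
def IsEquilateral {dim : ℕ} (p : ℕ → EuclideanSpace ℝ (Fin dim)) (m : ℕ) : Prop :=
  ∀ k l : ℕ, 1 ≤ k → k ≤ m → 1 ≤ l → l ≤ m →
    ‖p k - p (k - 1)‖ = ‖p l - p (l - 1)‖

/-- `q 0, …, q m` are the vertices of the arclength respacing `f(C)` of the
polygonal curve `C` with vertices `p 0, …, p m`:
`q k = P (k·L(C)/m)` where `P` is the arclength parameterization of `C`;
by convention `f(C) := C` when `L(C) = 0`. -/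
def Respaces {dim : ℕ} (m : ℕ) (p q : ℕ → EuclideanSpace ℝ (Fin dim)) : Prop :=
  (polyLength p m = 0 ∧ ∀ k ≤ m, q k = p k) ∨
  (0 < polyLength p m ∧ ∃ P : ℝ → EuclideanSpace ℝ (Fin dim), IsArcParam p m P ∧
    ∀ k ≤ m, q k = P ((k : ℝ) * polyLength p m / m))

lemma polyLength_succ' {dim : ℕ} (p : ℕ → EuclideanSpace ℝ (Fin dim)) (k : ℕ) :
    polyLength p (k + 1) = polyLength p k + ‖p (k + 1) - p k‖ := by
  simp [polyLength, Finset.sum_range_succ]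

lemma seg' {dim m : ℕ} (p : ℕ → EuclideanSpace ℝ (Fin dim))
    (P : ℝ → EuclideanSpace ℝ (Fin dim)) (hP : IsArcParam p m P) (k : ℕ) (hk : k + 1 ≤ m)
    (a b : ℝ) (ha : polyLength p k ≤ a) (hab : a ≤ b) (hb : b ≤ polyLength p (k + 1)) :
    ‖P b - P a‖ ≤ b - a := by
  have hsucc := polyLength_succ' p k
  rcases eq_or_lt_of_le (norm_nonneg (p (k + 1) - p k)) with h0 | h0
  · have hab' : a = b := le_antisymm hab (by rw [hsucc, ← h0] at hb; linarith)
    simp [hab']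
  · have hPseg : ∀ u : ℝ, 0 ≤ u → u ≤ 1 →
        P ((1 - u) * polyLength p k + u * polyLength p (k + 1))
          = (1 - u) • p k + u • p (k + 1) := by
      intro u hu0 hu1
      simpa using hP (k + 1) (by omega) hk u hu0 hu1
    obtain ⟨c, hc⟩ : ∃ c, ‖p (k + 1) - p k‖ = c := ⟨_, rfl⟩
    rw [hc] at h0 hsucc
    have hs0 : 0 ≤ (a - polyLength p k) / c := div_nonneg (by linarith) h0.le
    have ht0 : 0 ≤ (b - polyLength p k) / c := div_nonneg (by linarith) h0.le
    have hs1 : (a - polyLength p k) / c ≤ 1 := by rw [div_le_one h0]; linarith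
    have ht1 : (b - polyLength p k) / c ≤ 1 := by rw [div_le_one h0]; linarith
    have hacs : a = (1 - (a - polyLength p k) / c) * polyLength p k
        + ((a - polyLength p k) / c) * polyLength p (k + 1) := by
      rw [hsucc]; field_simp; ring
    have hbct : b = (1 - (b - polyLength p k) / c) * polyLength p k
        + ((b - polyLength p k) / c) * polyLength p (k + 1) := by
      rw [hsucc]; field_simp; ring
    have hPa : P a = (1 - (a - polyLength p k) / c) • p k
        + ((a - polyLength p k) / c) • p (k + 1) := by
      nth_rewrite 1 [hacs]; exact hPseg _ hs0 hs1
    have hPb : P b = (1 - (b - polyLength p k) / c) • p k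
        + ((b - polyLength p k) / c) • p (k + 1) := by
      nth_rewrite 1 [hbct]; exact hPseg _ ht0 ht1
    have hdiff : P b - P a
        = ((b - polyLength p k) / c - (a - polyLength p k) / c) • (p (k + 1) - p k) := by
      rw [hPa, hPb]; module
    have hst : (a - polyLength p k) / c ≤ (b - polyLength p k) / c := by
      gcongr
    rw [hdiff, norm_smul, Real.norm_of_nonneg (by linarith), hc]
    have hkey : ((b - polyLength p k) / c - (a - polyLength p k) / c) * c = b - a := by
      field_simp; ring
    linarith

lemma polyLength_mono {dim : ℕ} (p : ℕ → EuclideanSpace ℝ (Fin dim)) {j k : ℕ}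
    (h : j ≤ k) : polyLength p j ≤ polyLength p k := by
  apply Finset.sum_le_sum_of_subset_of_nonneg (Finset.range_subset_range.mpr h)
  intros; positivity

lemma lip' {dim m : ℕ} (p : ℕ → EuclideanSpace ℝ (Fin dim))
    (P : ℝ → EuclideanSpace ℝ (Fin dim)) (hP : IsArcParam p m P) :
    ∀ k, k ≤ m → ∀ a b : ℝ, 0 ≤ a → a ≤ b → b ≤ polyLength p k →
      ‖P b - P a‖ ≤ b - a := by
  intro k
  induction k with
  | zero =>
    intro _ a b ha hab hb
    have h0 : polyLength p 0 = 0 := by simp [polyLength]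
    rw [h0] at hb
    have : a = b := le_antisymm hab (by linarith)
    simp [this]
  | succ k ih =>
    intro hk a b ha hab hb
    rcases le_or_gt (polyLength p k) a with hcase | hcase
    · exact seg' p P hP k hk a b hcase hab hb
    rcases le_or_gt b (polyLength p k) with hcase2 | hcase2
    · exact ih (by omega) a b ha hab hcase2
    · have h1 : ‖P b - P (polyLength p k)‖ ≤ b - polyLength p k :=
        seg' p P hP k hk _ b le_rfl hcase2.le hb
      have h2 : ‖P (polyLength p k) - P a‖ ≤ polyLength p k - a :=
        ih (by omega) a _ ha hcase.le le_rfl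
      calc ‖P b - P a‖ = ‖(P b - P (polyLength p k)) + (P (polyLength p k) - P a)‖ := by
            rw [sub_add_sub_cancel]
        _ ≤ ‖P b - P (polyLength p k)‖ + ‖P (polyLength p k) - P a‖ := norm_add_le _ _
        _ ≤ b - a := by linarith

/-- Consecutive vertices of the arclength respacing are at distance at most `L(C)/m`. -/
theorem stmt11 {dim m : ℕ} (hm : 1 ≤ m) (p : ℕ → EuclideanSpace ℝ (Fin dim))
    (hL : 0 < polyLength p m)
    (P : ℝ → EuclideanSpace ℝ (Fin dim)) (hP : IsArcParam p m P)
    (q : ℕ → EuclideanSpace ℝ (Fin dim))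
    (hq : ∀ k ≤ m, q k = P ((k : ℝ) * polyLength p m / m)) :
    ∀ k : ℕ, 1 ≤ k → k ≤ m →
      ‖q k - q (k - 1)‖ ≤ polyLength p m / m := by
  intro k hk1 hkm
  set L := polyLength p m with hLdef
  have hm' : (0 : ℝ) < m := by exact_mod_cast hm
  have hcast : ((k - 1 : ℕ) : ℝ) = (k : ℝ) - 1 := by
    have : (1 : ℕ) ≤ k := hk1
    push_cast [Nat.cast_sub this]
    ring
  rw [hq k hkm, hq (k - 1) (by omega), hcast]
  have ha0 : 0 ≤ ((k : ℝ) - 1) * L / m := by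
    apply div_nonneg _ hm'.le
    apply mul_nonneg _ hL.le
    have : (1 : ℝ) ≤ (k : ℝ) := by exact_mod_cast hk1
    linarith
  have hab : ((k : ℝ) - 1) * L / m ≤ (k : ℝ) * L / m := by
    gcongr
    linarith
  have hb : (k : ℝ) * L / m ≤ polyLength p m := by
    rw [div_le_iff₀ hm']
    have hkm' : (k : ℝ) ≤ (m : ℝ) := by exact_mod_cast hkm
    calc (k : ℝ) * L ≤ (m : ℝ) * L := by gcongr
      _ = polyLength p m * (m : ℝ) := by rw [hLdef]; ring
  have := lip' p P hP m le_rfl _ _ ha0 hab hb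
  have hdiff : (k : ℝ) * L / m - ((k : ℝ) - 1) * L / m = L / m := by
    field_simp; ring
  linarith
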